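/- arXiv:2605.31496 — 4 statements merged into one kernel-verified Lean document; each statement's English description precedes it below -/
import Mathlib

section
/- Let r ≥ 1 be an integer, let a = (a_1,…,a_r) ∈ [0,1]^r, extended by a_0 := 0 and a_m := 1 for m > r, and let 0 ≤ k ≤ r. Then for all real x and y: T_k(y)·S_r^{(a)}(x,y) − T_k(x)·S_r^{(a)}(x,y) = a_k·(T_k(y) − T_k(x)) + ∑_{j=1}^{r} (a_{j+k} − a_j)·(T_j(x)T_{j+k}(y) − T_{j+k}(x)T_j(y)) + (1/2)·∑_{j=1}^{k−1} (a_{k−j} − a_j)·(T_j(x)T_{k−j}(y) − T_{k−j}(x)T_j(y)). -/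
open Polynomial

/-- The k-th Chebyshev polynomial of the first kind over ℝ. -/
noncomputable def chebT (k : ℕ) : Polynomial ℝ := Polynomial.Chebyshev.T ℝ (k : ℤ)

/-- The kernel `S_r^{(a)}(x,y) = 1 + 2∑_{j=1}^r (1-a_j) T_j(x) T_j(y)`. -/
noncomputable def Sker (r : ℕ) (a : ℕ → ℝ) (x y : ℝ) : ℝ :=
  1 + 2 * ∑ j ∈ Finset.Icc 1 r, (1 - a j) * (chebT j).eval x * (chebT j).eval y

/-- auxiliary antisymmetric bracket -/
noncomputable def Bxy (x y : ℝ) (m n : ℤ) : ℝ :=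
  (Polynomial.Chebyshev.T ℝ m).eval x * (Polynomial.Chebyshev.T ℝ n).eval y -
    (Polynomial.Chebyshev.T ℝ n).eval x * (Polynomial.Chebyshev.T ℝ m).eval y

lemma Bxy_antisymm (x y : ℝ) (m n : ℤ) : Bxy x y m n = - Bxy x y n m := by
  simp only [Bxy]; ring

lemma Bxy_neg_right (x y : ℝ) (m n : ℤ) : Bxy x y m (-n) = Bxy x y m n := by
  simp [Bxy, Polynomial.Chebyshev.T_neg]

lemma cheb_eval_mul (z : ℝ) (m n : ℤ) :
    2 * (Polynomial.Chebyshev.T ℝ m).eval z * (Polynomial.Chebyshev.T ℝ n).eval z =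
      (Polynomial.Chebyshev.T ℝ (m + n)).eval z +
        (Polynomial.Chebyshev.T ℝ (m - n)).eval z := by
  have h := congrArg (Polynomial.eval z) (Polynomial.Chebyshev.T_mul_T ℝ m n)
  simpa using h

/-- symmetry identity for `T_k(y) S_r^{(a)}(x,y) - T_k(x) S_r^{(a)}(x,y)`. -/
theorem Sker_symmetry_identity (r : ℕ) (hr : 1 ≤ r) (a : ℕ → ℝ) (ha0 : a 0 = 0)
    (ha : ∀ j ∈ Finset.Icc 1 r, a j ∈ Set.Icc (0 : ℝ) 1) (ha1 : ∀ m, r < m → a m = 1)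
    (k : ℕ) (hk : k ≤ r) :
    ∀ x y : ℝ,
      (chebT k).eval y * Sker r a x y - (chebT k).eval x * Sker r a x y =
        a k * ((chebT k).eval y - (chebT k).eval x) +
        (∑ j ∈ Finset.Icc 1 r, (a (j + k) - a j) *
          ((chebT j).eval x * (chebT (j + k)).eval y -
            (chebT (j + k)).eval x * (chebT j).eval y)) +
        (1 / 2) * ∑ j ∈ Finset.Icc 1 (k - 1), (a (k - j) - a j) *
          ((chebT j).eval x * (chebT (k - j)).eval y -
            (chebT (k - j)).eval x * (chebT j).eval y) := by
  intro x y
  rcases Nat.eq_zero_or_pos k with hk0 | hk1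
  · subst hk0
    simp [chebT, Polynomial.Chebyshev.T_zero, ha0]
  -- k ≥ 1 case
  set P : ℤ → ℝ := fun n => (Polynomial.Chebyshev.T ℝ n).eval x with hP
  set Q : ℤ → ℝ := fun n => (Polynomial.Chebyshev.T ℝ n).eval y with hQ
  have hch : ∀ j : ℕ, (chebT j).eval x = P j ∧ (chebT j).eval y = Q j := fun j => ⟨rfl, rfl⟩
  have hB : ∀ m n : ℤ, Bxy x y m n = P m * Q n - P n * Q m := fun m n => rfl
  have hP0 : P 0 = 1 := by simp [hP, Polynomial.Chebyshev.T_zero]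
  have hQ0 : Q 0 = 1 := by simp [hQ, Polynomial.Chebyshev.T_zero]
  -- step 1
  have step1 : (chebT k).eval y * Sker r a x y - (chebT k).eval x * Sker r a x y =
      Bxy x y 0 k + ∑ j ∈ Finset.Icc 1 r,
        (1 - a j) * (Bxy x y j (j + k) + Bxy x y j ((j : ℤ) - k)) := by
    have hterm : ∀ j ∈ Finset.Icc 1 r,
        (1 - a j) * (Bxy x y j (j + k) + Bxy x y j ((j : ℤ) - k)) =
          2 * ((1 - a j) * (chebT j).eval x * (chebT j).eval y) * (chebT k).eval y -
          2 * ((1 - a j) * (chebT j).eval x * (chebT j).eval y) * (chebT k).eval x := by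
      intro j _
      have h1 := cheb_eval_mul y (j : ℤ) (k : ℤ)
      have h2 := cheb_eval_mul x (j : ℤ) (k : ℤ)
      simp only [Bxy, chebT]
      linear_combination (-((1 - a j) * (Polynomial.Chebyshev.T ℝ (j : ℤ)).eval x)) * h1 +
        (1 - a j) * (Polynomial.Chebyshev.T ℝ (j : ℤ)).eval y * h2
    rw [Finset.sum_congr rfl hterm, Finset.sum_sub_distrib, ← Finset.sum_mul, ← Finset.sum_mul,
      ← Finset.mul_sum]
    simp only [Sker, Bxy, chebT, Polynomial.Chebyshev.T_zero, Polynomial.eval_one]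
    ring
  -- reindex middle part: sum over Ioc k r of (1-a j) * Bxy j (j - k)
  have hreix : ∑ j ∈ Finset.Ioc k r, (1 - a j) * Bxy x y j ((j : ℤ) - k) =
      ∑ i ∈ Finset.Icc 1 (r - k), -((1 - a (i + k)) * Bxy x y i (i + k)) := by
    rw [show Finset.Ioc k r = Finset.map (addRightEmbedding k) (Finset.Ioc 0 (r - k)) by
      rw [Finset.map_add_right_Ioc]; congr 1 <;> omega]
    rw [Finset.sum_map]
    rw [show Finset.Ioc 0 (r-k) = Finset.Icc 1 (r-k) by rw [← Finset.Icc_add_one_left_eq_Ioc, zero_add]]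
    refine Finset.sum_congr rfl fun i hi => ?_
    simp only [addRightEmbedding_apply]
    have : ((i + k : ℕ) : ℤ) - (k : ℤ) = (i : ℤ) := by push_cast; ring
    rw [this, hB, hB]
    push_cast
    ring
  -- split S2
  have step2 : ∑ j ∈ Finset.Icc 1 r, (1 - a j) * Bxy x y j ((j : ℤ) - k) =
      (∑ j ∈ Finset.Icc 1 (k - 1), (1 - a j) * Bxy x y j ((k : ℤ) - j)) -
        (1 - a k) * Bxy x y 0 k -
        ∑ i ∈ Finset.Icc 1 (r - k), (1 - a (i + k)) * Bxy x y i (i + k) := by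
    have hsplit : Finset.Icc 1 r = Finset.Icc 1 k ∪ Finset.Ioc k r := by
      ext j
      simp only [Finset.mem_union, Finset.mem_Icc, Finset.mem_Ioc]
      omega
    rw [hsplit, Finset.sum_union (by
      simp only [Finset.disjoint_left, Finset.mem_Icc, Finset.mem_Ioc]
      omega)]
    have hsplit2 : Finset.Icc 1 k = insert k (Finset.Icc 1 (k - 1)) := by
      ext j; simp only [Finset.mem_insert, Finset.mem_Icc]; omega
    rw [hsplit2, Finset.sum_insert (by simp only [Finset.mem_Icc]; omega)]
    rw [hreix]
    have hkterm : (1 - a k) * Bxy x y k ((k : ℤ) - k) = -((1 - a k) * Bxy x y 0 k) := by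
      rw [sub_self, hB, hB, hP0, hQ0]; ring
    rw [hkterm]
    have hmid : ∀ j ∈ Finset.Icc 1 (k - 1),
        (1 - a j) * Bxy x y j ((j : ℤ) - k) = (1 - a j) * Bxy x y j ((k : ℤ) - j) := by
      intro j hj
      rw [show ((j : ℤ) - k) = -((k : ℤ) - j) by ring, Bxy_neg_right]
    rw [Finset.sum_congr rfl hmid, Finset.sum_neg_distrib]
    ring
  -- extension of the reindexed sum to Icc 1 r (terms vanish beyond r - k)
  have step3 : ∑ i ∈ Finset.Icc 1 (r - k), (1 - a (i + k)) * Bxy x y i (i + k) =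
      ∑ j ∈ Finset.Icc 1 r, (1 - a (j + k)) * Bxy x y j (j + k) := by
    refine Finset.sum_subset (Finset.Icc_subset_Icc_right (Nat.sub_le r k)) ?_
    intro j hj hnj
    simp only [Finset.mem_Icc] at hj hnj
    have : r < j + k := by omega
    rw [ha1 _ this]
    ring
  -- reflection for the tail sum
  have step4 : 2 * ∑ j ∈ Finset.Icc 1 (k - 1), (1 - a j) * Bxy x y j ((k : ℤ) - j) =
      ∑ j ∈ Finset.Icc 1 (k - 1), (a (k - j) - a j) * Bxy x y j ((k : ℤ) - j) := by
    have hrefl : ∑ j ∈ Finset.Icc 1 (k - 1), (1 - a j) * Bxy x y j ((k : ℤ) - j) =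
        ∑ j ∈ Finset.Icc 1 (k - 1), -((1 - a (k - j)) * Bxy x y j ((k : ℤ) - j)) := by
      refine Finset.sum_nbij' (fun j => k - j) (fun j => k - j) ?_ ?_ ?_ ?_ ?_
      · intro j hj; simp only [Finset.mem_Icc] at hj ⊢; omega
      · intro j hj; simp only [Finset.mem_Icc] at hj ⊢; omega
      · intro j hj; simp only [Finset.mem_Icc] at hj; show k - (k - j) = j; omega
      · intro j hj; simp only [Finset.mem_Icc] at hj; show k - (k - j) = j; omega
      · intro j hj
        simp only [Finset.mem_Icc] at hj
        show (1 - a j) * Bxy x y j ((k : ℤ) - j) =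
          -((1 - a (k - (k - j))) * Bxy x y ((k - j : ℕ) : ℤ) ((k : ℤ) - ((k - j : ℕ) : ℤ)))
        have hcast : ((k - j : ℕ) : ℤ) = (k : ℤ) - j := by
          rw [Nat.cast_sub (by omega)]
        have hkk : k - (k - j) = j := by omega
        rw [hcast, hkk, show ((k : ℤ) - ((k:ℤ) - j)) = (j : ℤ) by ring, hB, hB]
        ring
    calc 2 * ∑ j ∈ Finset.Icc 1 (k - 1), (1 - a j) * Bxy x y j ((k : ℤ) - j)
        = (∑ j ∈ Finset.Icc 1 (k - 1), (1 - a j) * Bxy x y j ((k : ℤ) - j)) +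
          ∑ j ∈ Finset.Icc 1 (k - 1), -((1 - a (k - j)) * Bxy x y j ((k : ℤ) - j)) := by
          rw [← hrefl]; ring
      _ = _ := by
          rw [← Finset.sum_add_distrib]
          refine Finset.sum_congr rfl fun j hj => ?_
          ring
  -- convert RHS pieces to Bxy form
  have hRHSmid : ∀ j ∈ Finset.Icc 1 r,
      (a (j + k) - a j) * ((chebT j).eval x * (chebT (j + k)).eval y -
        (chebT (j + k)).eval x * (chebT j).eval y) =
      (a (j + k) - a j) * Bxy x y j (j + k) := by
    intro j _
    have : ((j + k : ℕ) : ℤ) = (j : ℤ) + k := by push_cast; ring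
    simp only [chebT, Bxy, this]
  have hRHStail : ∀ j ∈ Finset.Icc 1 (k - 1),
      (a (k - j) - a j) * ((chebT j).eval x * (chebT (k - j)).eval y -
        (chebT (k - j)).eval x * (chebT j).eval y) =
      (a (k - j) - a j) * Bxy x y j ((k : ℤ) - j) := by
    intro j hj
    simp only [Finset.mem_Icc] at hj
    have : ((k - j : ℕ) : ℤ) = (k : ℤ) - j := by rw [Nat.cast_sub (by omega)]
    simp only [chebT, Bxy, this]
  have hchk : (chebT k).eval y - (chebT k).eval x = Bxy x y 0 k := by
    rw [hB, hP0, hQ0, (hch k).1, (hch k).2]; ring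
  have hsplitS : ∑ j ∈ Finset.Icc 1 r,
      (1 - a j) * (Bxy x y j (j + k) + Bxy x y j ((j : ℤ) - k)) =
      (∑ j ∈ Finset.Icc 1 r, (1 - a j) * Bxy x y j (j + k)) +
        ∑ j ∈ Finset.Icc 1 r, (1 - a j) * Bxy x y j ((j : ℤ) - k) := by
    rw [← Finset.sum_add_distrib]
    exact Finset.sum_congr rfl fun j _ => by ring
  have step5 : (∑ j ∈ Finset.Icc 1 r, (1 - a j) * Bxy x y j (j + k)) -
      (∑ j ∈ Finset.Icc 1 r, (1 - a (j + k)) * Bxy x y j (j + k)) =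
      ∑ j ∈ Finset.Icc 1 r, (a (j + k) - a j) * Bxy x y j (j + k) := by
    rw [← Finset.sum_sub_distrib]
    exact Finset.sum_congr rfl fun j _ => by ring
  have e5 : ∑ j ∈ Finset.Icc 1 r, (a (j + k) - a j) *
      ((chebT j).eval x * (chebT (j + k)).eval y -
        (chebT (j + k)).eval x * (chebT j).eval y) =
      ∑ j ∈ Finset.Icc 1 r, (a (j + k) - a j) * Bxy x y j (j + k) :=
    Finset.sum_congr rfl hRHSmid
  have e6 : ∑ j ∈ Finset.Icc 1 (k - 1), (a (k - j) - a j) *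
      ((chebT j).eval x * (chebT (k - j)).eval y -
        (chebT (k - j)).eval x * (chebT j).eval y) =
      ∑ j ∈ Finset.Icc 1 (k - 1), (a (k - j) - a j) * Bxy x y j ((k : ℤ) - j) :=
    Finset.sum_congr rfl hRHStail
  linear_combination step1 + hsplitS + step2 - step3 + step5 + (1/2) * step4 - e5 -
    (1/2) * e6 - a k * hchk
end

section
/- Let r ≥ 1 be an integer and a = (a_1,…,a_r) ∈ [0,1]^r. Suppose S_r^{(a)}(x,y) ≥ 0 for all (x,y) ∈ [−1,1]². Then for every x ∈ [−1,1], M_r^{(a)}(x) ≥ 1/2 + ∑_{j=1}^{r} (1−a_j)². -/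
open Polynomial

/-- `M_r^{(a)}(x) = 1 + 2∑_{j=1}^r (1-a_j)² T_j(x)²`. -/
noncomputable def Mfun (r : ℕ) (a : ℕ → ℝ) (x : ℝ) : ℝ :=
  1 + 2 * ∑ j ∈ Finset.Icc 1 r, (1 - a j) ^ 2 * (chebT j).eval x ^ 2

open Real Finset in
/-- Sums of cosines over an arithmetic progression of angles vanish. -/
lemma aux_sum_cos (N : ℕ) (j : ℤ) (hj : ¬ ((N:ℤ) ∣ j)) (c : ℝ) :
    ∑ m ∈ Finset.range N, Real.cos (2 * π * j * m / N + c) = 0 := by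
  rcases Nat.eq_zero_or_pos N with h0 | hNpos
  · simp [h0]
  have hN : (N:ℝ) ≠ 0 := by positivity
  have hNC : (N:ℂ) ≠ 0 := by exact_mod_cast hN
  set z : ℂ := Complex.exp ((2 * π * j / N : ℝ) * Complex.I) with hz
  have hz1 : z ≠ 1 := by
    intro h
    rw [hz, Complex.exp_eq_one_iff] at h
    obtain ⟨n, hn⟩ := h
    apply hj
    have him := congrArg Complex.im hn
    simp at him
    have hπ : (0:ℝ) < π := Real.pi_pos
    field_simp at him
    have h4 : (2*π)*(j:ℝ) = (2*π)*((n:ℝ)*N) := by linear_combination (2*π) * him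
    have h5 := mul_left_cancel₀ (show (2*π:ℝ) ≠ 0 by positivity) h4
    have h6 : j = n * (N:ℤ) := by exact_mod_cast h5
    exact ⟨n, by rw [h6, mul_comm]⟩
  have hzN : z ^ N = 1 := by
    rw [hz, ← Complex.exp_nat_mul]
    have : (N:ℂ) * (((2 * π * j / N : ℝ)) * Complex.I) = (j:ℂ) * (2 * π * Complex.I) := by
      push_cast
      field_simp
    rw [this, Complex.exp_int_mul_two_pi_mul_I]
  have hgeom : ∑ m ∈ Finset.range N, z ^ m = 0 := by
    rw [geom_sum_eq hz1, hzN]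
    simp
  have key : ∑ m ∈ Finset.range N,
      Complex.exp (((2 * π * j * m / N + c : ℝ)) * Complex.I) = 0 := by
    have he : ∀ m ∈ Finset.range N,
        Complex.exp (((2 * π * j * m / N + c : ℝ)) * Complex.I)
          = Complex.exp ((c:ℝ) * Complex.I) * z ^ m := by
      intro m _
      rw [hz, ← Complex.exp_nat_mul, ← Complex.exp_add]
      congr 1
      push_cast
      field_simp
      ring
    rw [Finset.sum_congr rfl he, ← Finset.mul_sum, hgeom, mul_zero]
  calc ∑ m ∈ Finset.range N, Real.cos (2 * π * j * m / N + c)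
      = ∑ m ∈ Finset.range N,
          (Complex.exp (((2 * π * j * m / N + c : ℝ)) * Complex.I)).re :=
        Finset.sum_congr rfl fun m _ => (Complex.exp_ofReal_mul_I_re _).symm
    _ = (∑ m ∈ Finset.range N,
          Complex.exp (((2 * π * j * m / N + c : ℝ)) * Complex.I)).re :=
        (Complex.re_sum _ _).symm
    _ = 0 := by rw [key]; rfl

open Real Finset in
lemma aux_sum_cos' (N : ℕ) (d : ℤ) (hd : d ≠ 0) (hdN : |d| < (N:ℤ)) (c : ℝ) :
    ∑ m ∈ Finset.range N, Real.cos ((d:ℝ) * (2 * π * m / N) + c) = 0 := by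
  have hdvd : ¬ ((N:ℤ) ∣ d) := by
    intro h
    have h1 : (N:ℤ) ∣ |d| := (dvd_abs _ _).mpr h
    have h2 := Int.le_of_dvd (abs_pos.mpr hd) h1
    linarith
  have := aux_sum_cos N d hdvd c
  rw [← this]
  refine Finset.sum_congr rfl fun m _ => ?_
  congr 1
  ring

open Real Finset in
/-- Fejér-type autocorrelation: if `1 + 2∑ b_j cos(jα) ≥ 0` for all `α`, then the
cosine polynomial with squared coefficients is also nonnegative. Proved by a discrete
autocorrelation over `N = 2r+1` equally spaced points. -/
lemma aux_autocorr (r : ℕ) (b : ℕ → ℝ)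
    (hf : ∀ α : ℝ, 0 ≤ 1 + 2 * ∑ j ∈ Finset.Icc 1 r, b j * Real.cos (j * α))
    (θ : ℝ) :
    0 ≤ 1 + 2 * ∑ j ∈ Finset.Icc 1 r, (b j)^2 * Real.cos (j * θ) := by
  set N := 2 * r + 1 with hNdef
  set α : ℕ → ℝ := fun m => 2 * π * m / N with hα
  have hNeq : (N:ℤ) = 2*(r:ℤ)+1 := by rw [hNdef]; push_cast; ring
  have hcos0 : ∀ d : ℤ, d ≠ 0 → |d| ≤ 2*(r:ℤ) → ∀ c : ℝ,
      ∑ m ∈ Finset.range N, Real.cos ((d:ℝ) * α m + c) = 0 := by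
    intro d hd hdr c
    have hlt : |d| < (N:ℤ) := by linarith
    exact aux_sum_cos' N d hd hlt c
  have hmem : ∀ j ∈ Finset.Icc 1 r, 1 ≤ j ∧ j ≤ r := by
    intro j hj; exact Finset.mem_Icc.mp hj
  have hsingle : ∀ c : ℝ, ∀ j ∈ Finset.Icc 1 r,
      ∑ m ∈ Finset.range N, Real.cos ((j:ℝ) * α m + c) = 0 := by
    intro c j hj
    obtain ⟨hj1, hj2⟩ := hmem j hj
    have habs : |(j:ℤ)| ≤ 2*(r:ℤ) := by
      rw [abs_of_nonneg (by positivity)]; exact_mod_cast by omega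
    have := hcos0 (j:ℤ) (by exact_mod_cast by omega) habs c
    simpa using this
  -- product orthogonality
  have hprod : ∀ j ∈ Finset.Icc 1 r, ∀ k ∈ Finset.Icc 1 r,
      ∑ m ∈ Finset.range N, Real.cos (j * α m) * Real.cos (k * (α m + θ))
        = if j = k then (N:ℝ) * Real.cos (j * θ) / 2 else 0 := by
    intro j hj k hk
    obtain ⟨hj1, hj2⟩ := hmem j hj
    obtain ⟨hk1, hk2⟩ := hmem k hk
    have step : ∀ m : ℕ, Real.cos (j * α m) * Real.cos (k * (α m + θ))
        = (Real.cos ((((j:ℤ) - k : ℤ):ℝ) * α m + (-((k:ℝ) * θ)))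
           + Real.cos ((((j:ℤ) + k : ℤ):ℝ) * α m + (k:ℝ) * θ)) / 2 := by
      intro m
      have e1 : (j:ℝ) * α m - k * (α m + θ) = (((j:ℤ) - k : ℤ):ℝ) * α m + (-((k:ℝ) * θ)) := by
        push_cast; ring
      have e2 : (j:ℝ) * α m + k * (α m + θ) = (((j:ℤ) + k : ℤ):ℝ) * α m + ((k:ℝ) * θ) := by
        push_cast; ring
      rw [← e1, ← e2]
      linarith [Real.two_mul_cos_mul_cos ((j:ℝ) * α m) ((k:ℝ) * (α m + θ))]
    rw [Finset.sum_congr rfl fun m _ => step m, ← Finset.sum_div, Finset.sum_add_distrib]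
    have hsum2 : ∑ m ∈ Finset.range N, Real.cos ((((j:ℤ) + k : ℤ):ℝ) * α m + (k:ℝ) * θ) = 0 := by
      refine hcos0 ((j:ℤ) + k) (by omega) ?_ _
      rw [abs_of_nonneg (by positivity)]; omega
    by_cases hjk : j = k
    · subst hjk
      rw [if_pos rfl]
      have hconst : ∀ m ∈ Finset.range N,
          Real.cos ((((j:ℤ) - j : ℤ):ℝ) * α m + (-((j:ℝ) * θ))) = Real.cos ((j:ℝ) * θ) := by
        intro m _
        rw [sub_self]
        push_cast
        rw [zero_mul, zero_add, Real.cos_neg]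
      rw [Finset.sum_congr rfl hconst, Finset.sum_const, Finset.card_range, hsum2,
        nsmul_eq_mul]
      ring
    · rw [if_neg hjk]
      have hsum1 : ∑ m ∈ Finset.range N,
          Real.cos ((((j:ℤ) - k : ℤ):ℝ) * α m + (-((k:ℝ) * θ))) = 0 := by
        refine hcos0 ((j:ℤ) - k) (by omega) ?_ _
        rw [abs_le]; omega
      rw [hsum1, hsum2]
      norm_num
  -- single sums vanish
  have hA : ∑ m ∈ Finset.range N, ∑ j ∈ Finset.Icc 1 r, b j * Real.cos ((j:ℝ) * α m) = 0 := by
    rw [Finset.sum_comm]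
    refine Finset.sum_eq_zero fun j hj => ?_
    rw [← Finset.mul_sum]
    have h0 : ∑ m ∈ Finset.range N, Real.cos ((j:ℝ) * α m) = 0 := by
      have := hsingle 0 j hj
      simpa using this
    rw [h0, mul_zero]
  have hB : ∑ m ∈ Finset.range N, ∑ j ∈ Finset.Icc 1 r, b j * Real.cos ((j:ℝ) * (α m + θ)) = 0 := by
    rw [Finset.sum_comm]
    refine Finset.sum_eq_zero fun j hj => ?_
    rw [← Finset.mul_sum]
    have h0 : ∑ m ∈ Finset.range N, Real.cos ((j:ℝ) * (α m + θ)) = 0 := by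
      have := hsingle ((j:ℝ) * θ) j hj
      rw [← this]
      exact Finset.sum_congr rfl fun m _ => by rw [mul_add]
    rw [h0, mul_zero]
  -- product sum
  have hAB : ∑ m ∈ Finset.range N,
      (∑ j ∈ Finset.Icc 1 r, b j * Real.cos ((j:ℝ) * α m))
        * (∑ k ∈ Finset.Icc 1 r, b k * Real.cos ((k:ℝ) * (α m + θ)))
      = (N:ℝ) / 2 * ∑ j ∈ Finset.Icc 1 r, (b j)^2 * Real.cos ((j:ℝ) * θ) := by
    have expand : ∀ m : ℕ,
        (∑ j ∈ Finset.Icc 1 r, b j * Real.cos ((j:ℝ) * α m))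
          * (∑ k ∈ Finset.Icc 1 r, b k * Real.cos ((k:ℝ) * (α m + θ)))
        = ∑ j ∈ Finset.Icc 1 r, ∑ k ∈ Finset.Icc 1 r,
            (b j * b k) * (Real.cos ((j:ℝ) * α m) * Real.cos ((k:ℝ) * (α m + θ))) := by
      intro m
      rw [Finset.sum_mul_sum]
      exact Finset.sum_congr rfl fun j _ => Finset.sum_congr rfl fun k _ => by ring
    rw [Finset.sum_congr rfl fun m _ => expand m, Finset.sum_comm]
    have inner : ∀ j ∈ Finset.Icc 1 r,
        ∑ m ∈ Finset.range N, ∑ k ∈ Finset.Icc 1 r,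
          (b j * b k) * (Real.cos ((j:ℝ) * α m) * Real.cos ((k:ℝ) * (α m + θ)))
        = (N:ℝ) / 2 * ((b j)^2 * Real.cos ((j:ℝ) * θ)) := by
      intro j hj
      rw [Finset.sum_comm]
      have inner2 : ∀ k ∈ Finset.Icc 1 r,
          ∑ m ∈ Finset.range N,
            (b j * b k) * (Real.cos ((j:ℝ) * α m) * Real.cos ((k:ℝ) * (α m + θ)))
          = if j = k then (b j * b k) * ((N:ℝ) * Real.cos ((j:ℝ) * θ) / 2) else 0 := by
        intro k hk
        rw [← Finset.mul_sum, hprod j hj k hk, mul_ite, mul_zero]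
      rw [Finset.sum_congr rfl inner2, Finset.sum_ite_eq (Finset.Icc 1 r) j
        (fun k => (b j * b k) * ((N:ℝ) * Real.cos ((j:ℝ) * θ) / 2)), if_pos hj]
      ring
    rw [Finset.sum_congr rfl inner, ← Finset.mul_sum]
  -- assemble
  have hexp : ∀ m : ℕ,
      (1 + 2 * ∑ j ∈ Finset.Icc 1 r, b j * Real.cos ((j:ℝ) * α m))
        * (1 + 2 * ∑ k ∈ Finset.Icc 1 r, b k * Real.cos ((k:ℝ) * (α m + θ)))
      = 1 + 2 * (∑ j ∈ Finset.Icc 1 r, b j * Real.cos ((j:ℝ) * α m))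
          + 2 * (∑ j ∈ Finset.Icc 1 r, b j * Real.cos ((j:ℝ) * (α m + θ)))
          + 4 * ((∑ j ∈ Finset.Icc 1 r, b j * Real.cos ((j:ℝ) * α m))
              * (∑ k ∈ Finset.Icc 1 r, b k * Real.cos ((k:ℝ) * (α m + θ)))) := by
    intro m; ring
  have hpos : 0 ≤ ∑ m ∈ Finset.range N,
      (1 + 2 * ∑ j ∈ Finset.Icc 1 r, b j * Real.cos ((j:ℝ) * α m))
        * (1 + 2 * ∑ k ∈ Finset.Icc 1 r, b k * Real.cos ((k:ℝ) * (α m + θ))) :=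
    Finset.sum_nonneg fun m _ => mul_nonneg (hf (α m)) (hf (α m + θ))
  rw [Finset.sum_congr rfl fun m _ => hexp m] at hpos
  rw [Finset.sum_add_distrib, Finset.sum_add_distrib, Finset.sum_add_distrib,
    Finset.sum_const, Finset.card_range, ← Finset.mul_sum, ← Finset.mul_sum,
    ← Finset.mul_sum, hA, hB, hAB, nsmul_eq_mul, mul_one] at hpos
  have hNpos : (0:ℝ) < N := by rw [hNdef]; positivity
  nlinarith [hpos]

lemma chebT_eval_cos (j : ℕ) (t : ℝ) : (chebT j).eval (Real.cos t) = Real.cos (j * t) := by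
  have := Polynomial.Chebyshev.T_real_cos t (j : ℤ)
  rw [chebT, this]
  push_cast
  ring_nf

lemma chebT_eval_one (j : ℕ) : (chebT j).eval 1 = 1 := by
  have := chebT_eval_cos j 0
  simpa using this

/-- if `S_r^{(a)} ≥ 0` on `[-1,1]²` then
`M_r^{(a)}(x) ≥ 1/2 + ∑_{j=1}^r (1-a_j)²` on `[-1,1]`. -/
theorem Mfun_lower_bound (r : ℕ) (hr : 1 ≤ r) (a : ℕ → ℝ)
    (ha : ∀ j ∈ Finset.Icc 1 r, a j ∈ Set.Icc (0 : ℝ) 1)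
    (hS : ∀ x ∈ Set.Icc (-1 : ℝ) 1, ∀ y ∈ Set.Icc (-1 : ℝ) 1, 0 ≤ Sker r a x y) :
    ∀ x ∈ Set.Icc (-1 : ℝ) 1,
      1 / 2 + ∑ j ∈ Finset.Icc 1 r, (1 - a j) ^ 2 ≤ Mfun r a x := by
  intro x hx
  obtain ⟨hx1, hx2⟩ := hx
  set φ := Real.arccos x with hφ
  have hcos : Real.cos φ = x := Real.cos_arccos hx1 hx2
  have hf : ∀ α : ℝ, 0 ≤ 1 + 2 * ∑ j ∈ Finset.Icc 1 r, (1 - a j) * Real.cos (j * α) := by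
    intro α
    have hc : Real.cos α ∈ Set.Icc (-1:ℝ) 1 := ⟨Real.neg_one_le_cos α, Real.cos_le_one α⟩
    have h1 : (1:ℝ) ∈ Set.Icc (-1:ℝ) 1 := by constructor <;> norm_num
    have hnn := hS (Real.cos α) hc 1 h1
    rw [Sker] at hnn
    have he : ∀ j ∈ Finset.Icc 1 r,
        (1 - a j) * (chebT j).eval (Real.cos α) * (chebT j).eval 1
          = (1 - a j) * Real.cos (j * α) := by
      intro j _
      rw [chebT_eval_cos, chebT_eval_one, mul_one]
    rwa [Finset.sum_congr rfl he] at hnn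
  have hkey := aux_autocorr r (fun j => 1 - a j) hf (2 * φ)
  have hM : Mfun r a x = 1 + (∑ j ∈ Finset.Icc 1 r, (1 - a j)^2)
      + ∑ j ∈ Finset.Icc 1 r, (1 - a j)^2 * Real.cos ((j:ℝ) * (2 * φ)) := by
    rw [Mfun]
    have he : ∀ j ∈ Finset.Icc 1 r,
        (1 - a j)^2 * (chebT j).eval x ^ 2
          = (1 - a j)^2 / 2 + ((1 - a j)^2 * Real.cos ((j:ℝ) * (2 * φ))) / 2 := by
      intro j _
      rw [← hcos, chebT_eval_cos, Real.cos_sq]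
      have : 2 * ((j:ℝ) * φ) = (j:ℝ) * (2 * φ) := by ring
      rw [this]
      ring
    rw [Finset.sum_congr rfl he, Finset.sum_add_distrib, ← Finset.sum_div, ← Finset.sum_div]
    ring
  rw [hM]
  linarith [hkey]
end

section
/- Let φ : ℝ → ℝ be continuous with φ(x) = 0 for x ≤ 0, φ(x) = 1 for x ≥ 1, and φ continuously differentiable on [0,1], and set M := sup_{t∈[0,1]} |φ'(t)|, assumed positive. Then ∫_0^1 (1 − φ(t))² dt ≥ 1/(3M). -/
/-- The sup-norm of the derivative of `φ` on `[0,1]` (derivative taken within `[0,1]`). -/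
noncomputable def phiDerivSup (φ : ℝ → ℝ) : ℝ :=
  ⨆ t : Set.Icc (0 : ℝ) 1, |derivWithin φ (Set.Icc 0 1) t|

/-- `∫_0^1 (1-φ(t))² dt ≥ 1/(3M)` where `M = ‖φ'‖_∞ > 0`. -/
theorem integral_one_sub_phi_sq_lower_bound (φ : ℝ → ℝ) (hcont : Continuous φ)
    (h0 : ∀ x : ℝ, x ≤ 0 → φ x = 0) (h1 : ∀ x : ℝ, 1 ≤ x → φ x = 1)
    (hC1 : ContDiffOn ℝ 1 φ (Set.Icc 0 1)) (hpos : 0 < phiDerivSup φ) :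
    1 / (3 * phiDerivSup φ) ≤ ∫ t in (0 : ℝ)..1, (1 - φ t) ^ 2 := by
  set M := phiDerivSup φ with hMdef
  have hMne : M ≠ 0 := ne_of_gt hpos
  have hudiff : UniqueDiffOn ℝ (Set.Icc (0:ℝ) 1) := uniqueDiffOn_Icc (by norm_num)
  have hdcont : ContinuousOn (fun t => derivWithin φ (Set.Icc 0 1) t) (Set.Icc (0:ℝ) 1) :=
    hC1.continuousOn_derivWithin hudiff le_rfl
  obtain ⟨C, hC⟩ := isCompact_Icc.exists_bound_of_continuousOn hdcont
  have hbdd : BddAbove (Set.range fun t : Set.Icc (0:ℝ) 1 => |derivWithin φ (Set.Icc 0 1) t|) := by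
    refine ⟨C, ?_⟩
    rintro x ⟨t, rfl⟩
    simpa [Real.norm_eq_abs] using hC t t.2
  have hM : ∀ t ∈ Set.Icc (0:ℝ) 1, |derivWithin φ (Set.Icc 0 1) t| ≤ M := by
    intro t ht
    exact le_ciSup hbdd (⟨t, ht⟩ : Set.Icc (0:ℝ) 1)
  have hdiff : DifferentiableOn ℝ φ (Set.Icc (0:ℝ) 1) := hC1.differentiableOn one_ne_zero
  have hMb : ∀ t ∈ Set.Icc (0:ℝ) 1, |φ t| ≤ M * t := by
    intro t ht
    have := (convex_Icc (0:ℝ) 1).norm_image_sub_le_of_norm_derivWithin_le hdiff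
      (fun x hx => by simpa [Real.norm_eq_abs] using hM x hx)
      (Set.mem_Icc.2 ⟨le_refl 0, by norm_num⟩) ht
    simpa [Real.norm_eq_abs, h0 0 le_rfl, abs_of_nonneg ht.1] using this
  have hM1 : 1 ≤ M := by
    have := hMb 1 (Set.mem_Icc.2 ⟨by norm_num, le_rfl⟩)
    simpa [h1 1 le_rfl] using this
  set b : ℝ := 1 / M with hbdef
  have hb0 : 0 < b := by positivity
  have hb1 : b ≤ 1 := by
    rw [hbdef, div_le_one hpos]; exact hM1
  -- compute ∫ t in 0..b, (1 - M*t)^2 = 1/(3*M)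
  have hF : ∀ t : ℝ, HasDerivAt (fun t => -(1 - M*t)^3 / (3*M)) ((1 - M*t)^2) t := by
    intro t
    have h1' : HasDerivAt (fun t : ℝ => 1 - M*t) (-M) t := by
      simpa using ((hasDerivAt_id t).const_mul M).const_sub 1
    have h2 : HasDerivAt (fun t : ℝ => -(1 - M*t)^3 / (3*M))
        (-((3:ℕ) * (1 - M*t)^2 * (-M)) / (3*M)) t := ((h1'.pow 3).neg).div_const (3*M)
    convert h2 using 1
    field_simp
    ring
  have hint : (∫ t in (0:ℝ)..b, (1 - M*t)^2) = 1/(3*M) := by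
    rw [intervalIntegral.integral_eq_sub_of_hasDerivAt (fun t _ => hF t)
      (Continuous.intervalIntegrable ((continuous_const.sub (continuous_const.mul continuous_id)).pow 2) 0 b)]
    have hMb' : M * b = 1 := by rw [hbdef, mul_one_div_cancel hMne]
    rw [hMb']
    field_simp
    ring
  have hcont2 : Continuous fun t => (1 - φ t)^2 := by continuity
  -- pointwise bound on [0, b]
  have hpt : ∀ t ∈ Set.Icc (0:ℝ) b, (1 - M*t)^2 ≤ (1 - φ t)^2 := by
    intro t ht
    have ht1 : t ∈ Set.Icc (0:ℝ) 1 := ⟨ht.1, le_trans ht.2 hb1⟩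
    have h1t : M * t ≤ 1 := by
      calc M * t ≤ M * b := mul_le_mul_of_nonneg_left ht.2 hpos.le
      _ = 1 := by rw [hbdef, mul_one_div_cancel hMne]
    have hphp : φ t ≤ M * t := le_trans (le_abs_self _) (hMb t ht1)
    have h0le : 0 ≤ 1 - M * t := by linarith
    have : 1 - M * t ≤ 1 - φ t := by linarith
    exact pow_le_pow_left₀ h0le this 2
  have step1 : (∫ t in (0:ℝ)..b, (1 - M*t)^2) ≤ ∫ t in (0:ℝ)..b, (1 - φ t)^2 := by
    apply intervalIntegral.integral_mono_on hb0.le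
      (Continuous.intervalIntegrable ((continuous_const.sub (continuous_const.mul continuous_id)).pow 2) 0 b)
      (hcont2.intervalIntegrable 0 b) hpt
  have step2 : (∫ t in (0:ℝ)..b, (1 - φ t)^2) ≤ ∫ t in (0:ℝ)..1, (1 - φ t)^2 := by
    have hsplit : (∫ t in (0:ℝ)..b, (1 - φ t)^2) + (∫ t in b..1, (1 - φ t)^2)
        = ∫ t in (0:ℝ)..1, (1 - φ t)^2 :=
      intervalIntegral.integral_add_adjacent_intervals
        (hcont2.intervalIntegrable 0 b) (hcont2.intervalIntegrable b 1)
    have hnn : 0 ≤ ∫ t in b..1, (1 - φ t)^2 :=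
      intervalIntegral.integral_nonneg hb1 (fun x _ => sq_nonneg _)
    linarith
  calc 1 / (3 * M) = ∫ t in (0:ℝ)..b, (1 - M*t)^2 := hint.symm
    _ ≤ ∫ t in (0:ℝ)..b, (1 - φ t)^2 := step1
    _ ≤ ∫ t in (0:ℝ)..1, (1 - φ t)^2 := step2
end

section
/- Let n ≥ 1 be an integer, ε > 0, let k_1,…,k_n ∈ ℕ, and let f_1,…,f_n be univariate real polynomials with ‖f_i − T_{k_i}‖_{1,cheb} ≤ ε for every i ∈ {1,…,n}. Then the n-variate real polynomial x ↦ ∏_{i=1}^n f_i(x_i) satisfies ‖∏_{i=1}^n f_i(x_i) − ∏_{i=1}^n T_{k_i}(x_i)‖_{1,cheb} ≤ ε·∑_{i=0}^{n−1} (1+ε)^i. Moreover, if ε ≤ 1/n then ‖∏_{i=1}^n f_i(x_i) − ∏_{i=1}^n T_{k_i}(x_i)‖_{1,cheb} ≤ e·ε·n, where e is Euler's number. -/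
open Polynomial

/-- The Chebyshev 1-norm of a univariate real polynomial: the sum of the absolute
values of the coefficients in the (unique) expansion in the Chebyshev basis. -/
noncomputable def cheb1Norm (p : Polynomial ℝ) : ℝ :=
  sInf {s : ℝ | ∃ c : ℕ →₀ ℝ,
    p = c.sum (fun j coef => Polynomial.C coef * chebT j) ∧ s = c.sum (fun _ coef => |coef|)}

/-- The multivariate (tensor) Chebyshev polynomial `T_α(x) = ∏ᵢ T_{αᵢ}(xᵢ)`. -/
noncomputable def mvChebT (n : ℕ) (α : Fin n → ℕ) : MvPolynomial (Fin n) ℝ :=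
  ∏ i, Polynomial.aeval (MvPolynomial.X i) (chebT (α i))

/-- The Chebyshev 1-norm of an n-variate real polynomial: the sum of the absolute values
of the coefficients in the (unique) expansion in the tensor Chebyshev basis. -/
noncomputable def mvCheb1Norm {n : ℕ} (p : MvPolynomial (Fin n) ℝ) : ℝ :=
  sInf {s : ℝ | ∃ c : (Fin n → ℕ) →₀ ℝ,
    p = c.sum (fun α coef => MvPolynomial.C coef * mvChebT n α) ∧
    s = c.sum (fun _ coef => |coef|)}

noncomputable def W {σ : Type*} (c : σ →₀ ℝ) : ℝ := c.sum (fun _ coef => |coef|)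

lemma W_nonneg {σ : Type*} (c : σ →₀ ℝ) : 0 ≤ W c :=
  Finset.sum_nonneg fun _ _ => abs_nonneg _

lemma W_eq_sum {σ : Type*} (c : σ →₀ ℝ) {s : Finset σ} (h : c.support ⊆ s) :
    W c = ∑ x ∈ s, |c x| := by
  refine Finset.sum_subset h fun x _ hx => ?_
  simp [Finsupp.notMem_support_iff.1 hx]

lemma W_zero {σ : Type*} : W (0 : σ →₀ ℝ) = 0 := by simp [W]

lemma W_single {σ : Type*} (x : σ) (v : ℝ) : W (Finsupp.single x v) = |v| := by
  simp [W, Finsupp.sum_single_index]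

lemma W_add_le {σ : Type*} (a b : σ →₀ ℝ) : W (a + b) ≤ W a + W b := by
  classical
  rw [W_eq_sum (a + b) Finsupp.support_add, W_eq_sum a Finset.subset_union_left,
    W_eq_sum b Finset.subset_union_right, ← Finset.sum_add_distrib]
  exact Finset.sum_le_sum fun x _ => by simpa using abs_add_le (a x) (b x)

lemma W_finsetSum_le {σ ι : Type*} (s : Finset ι) (g : ι → (σ →₀ ℝ)) :
    W (∑ i ∈ s, g i) ≤ ∑ i ∈ s, W (g i) := by
  classical
  induction s using Finset.induction_on with
  | empty => simp [W_zero]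
  | insert _ _ hx ih =>
    rw [Finset.sum_insert hx, Finset.sum_insert hx]
    exact (W_add_le _ _).trans (by linarith)

noncomputable def toPoly (c : ℕ →₀ ℝ) : Polynomial ℝ :=
  c.sum (fun j coef => Polynomial.C coef * chebT j)

lemma toPoly_add (a b : ℕ →₀ ℝ) : toPoly (a + b) = toPoly a + toPoly b := by
  unfold toPoly
  rw [Finsupp.sum_add_index] <;> intros <;> simp [add_mul]

lemma toPoly_single (j : ℕ) (v : ℝ) : toPoly (Finsupp.single j v) = C v * chebT j := by
  unfold toPoly
  rw [Finsupp.sum_single_index]; simp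

noncomputable def toMv {n : ℕ} (c : (Fin n → ℕ) →₀ ℝ) : MvPolynomial (Fin n) ℝ :=
  c.sum (fun α coef => MvPolynomial.C coef * mvChebT n α)

lemma toMv_add {n : ℕ} (a b : (Fin n → ℕ) →₀ ℝ) : toMv (a + b) = toMv a + toMv b := by
  unfold toMv
  rw [Finsupp.sum_add_index] <;> intros <;> simp [add_mul]

noncomputable def toMvHom (n : ℕ) : ((Fin n → ℕ) →₀ ℝ) →+ MvPolynomial (Fin n) ℝ :=
  AddMonoidHom.mk' toMv toMv_add

lemma toMv_finsupp_sum {n : ℕ} {ι M : Type*} [Zero M] (m : ι →₀ M)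
    (h : ι → M → ((Fin n → ℕ) →₀ ℝ)) :
    toMv (m.sum h) = m.sum fun i v => toMv (h i v) :=
  map_finsuppSum (toMvHom n) m h

lemma toMv_single {n : ℕ} (α : Fin n → ℕ) (v : ℝ) :
    toMv (Finsupp.single α v) = MvPolynomial.C v * mvChebT n α := by
  unfold toMv
  rw [Finsupp.sum_single_index]; simp

lemma mvChebT_update {n : ℕ} (α : Fin n → ℕ) (a : Fin n) (j : ℕ) (hα : α a = 0) :
    mvChebT n (Function.update α a j)
      = Polynomial.aeval (MvPolynomial.X a) (chebT j) * mvChebT n α := by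
  unfold mvChebT
  have h1 : ∀ i : Fin n, Polynomial.aeval (MvPolynomial.X i) (chebT (Function.update α a j i))
      = Function.update (fun i => (Polynomial.aeval (MvPolynomial.X i) (chebT (α i)) :
            MvPolynomial (Fin n) ℝ)) a
          (Polynomial.aeval (MvPolynomial.X a) (chebT j)) i := by
    intro i
    by_cases h : i = a
    · subst h; simp only [Function.update_self]
    · simp [Function.update_of_ne h]
  rw [Finset.prod_congr rfl (fun i _ => h1 i), Finset.prod_update_of_mem (Finset.mem_univ a),
    Finset.prod_eq_mul_prod_sdiff_singleton_of_mem (Finset.mem_univ a)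
      (fun i => Polynomial.aeval (MvPolynomial.X i) (chebT (α i))), hα]
  simp [chebT, Polynomial.Chebyshev.T_zero]

noncomputable def mulRep {n : ℕ} (a : Fin n) (g : ℕ →₀ ℝ) (c : (Fin n → ℕ) →₀ ℝ) :
    (Fin n → ℕ) →₀ ℝ :=
  g.sum fun j gj => c.sum fun α cα => Finsupp.single (Function.update α a j) (gj * cα)

lemma toMv_mulRep {n : ℕ} (a : Fin n) (g : ℕ →₀ ℝ) (c : (Fin n → ℕ) →₀ ℝ)
    (h : ∀ α ∈ c.support, α a = 0) :
    toMv (mulRep a g c)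
      = (g.sum fun j gj => MvPolynomial.C gj * Polynomial.aeval (MvPolynomial.X a) (chebT j))
          * toMv c := by
  have expand : toMv c = c.sum fun α cα => MvPolynomial.C cα * mvChebT n α := rfl
  unfold mulRep
  rw [toMv_finsupp_sum, expand, Finsupp.sum_mul]
  refine Finsupp.sum_congr fun j hj => ?_
  rw [toMv_finsupp_sum, Finsupp.mul_sum]
  refine Finsupp.sum_congr fun α hα => ?_
  rw [toMv_single, mvChebT_update α a j (h α hα), MvPolynomial.C_mul]
  ring

lemma W_mulRep_le {n : ℕ} (a : Fin n) (g : ℕ →₀ ℝ) (c : (Fin n → ℕ) →₀ ℝ) :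
    W (mulRep a g c) ≤ W g * W c := by
  unfold mulRep
  calc W (g.sum fun j gj => c.sum fun α cα => Finsupp.single (Function.update α a j) (gj * cα))
      ≤ ∑ j ∈ g.support, W (c.sum fun α cα => Finsupp.single (Function.update α a j) (g j * cα)) :=
        W_finsetSum_le _ _
    _ ≤ ∑ j ∈ g.support, ∑ α ∈ c.support, |g j * c α| := by
        refine Finset.sum_le_sum fun j _ => (W_finsetSum_le _ _).trans (le_of_eq ?_)
        exact Finset.sum_congr rfl fun α _ => W_single _ _
    _ = ∑ j ∈ g.support, |g j| * ∑ α ∈ c.support, |c α| := by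
        simp [abs_mul, Finset.mul_sum]
    _ = W g * W c := by
        rw [W, W, Finsupp.sum, Finsupp.sum, Finset.sum_mul]

lemma mulRep_support {n : ℕ} (a : Fin n) (g : ℕ →₀ ℝ) (c : (Fin n → ℕ) →₀ ℝ)
    {s : Finset (Fin n)} (hs : ∀ α ∈ c.support, ∀ i, i ∉ s → α i = 0) :
    ∀ β ∈ (mulRep a g c).support, ∀ i, i ∉ insert a s → β i = 0 := by
  intro β hβ i hi
  have h1 := Finsupp.support_sum hβ
  obtain ⟨j, hj, h2⟩ := Finset.mem_biUnion.1 h1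
  have h3 := Finsupp.support_sum h2
  obtain ⟨α, hα, h4⟩ := Finset.mem_biUnion.1 h3
  have h5 : β = Function.update α a j := by
    have := Finsupp.support_single_subset h4
    simpa using this
  have hia : i ≠ a := fun hh => hi (hh ▸ Finset.mem_insert_self a s)
  have his : i ∉ s := fun hh => hi (Finset.mem_insert_of_mem hh)
  rw [h5, Function.update_of_ne hia]
  exact hs α hα i his

lemma chebT_facts : ∀ k : ℕ, (chebT k).natDegree ≤ k ∧
    (chebT k).coeff k = (if k = 0 then 1 else 2 ^ (k - 1)) := by
  intro k
  induction k using Nat.strong_induction_on with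
  | _ k ih =>
    match k with
    | 0 => simp [chebT, Polynomial.Chebyshev.T_zero]
    | 1 => simp [chebT, Polynomial.Chebyshev.T_one]
    | (m+2) =>
      have h1 := ih (m+1) (by omega)
      have h0 := ih m (by omega)
      have hT : chebT (m+2) = 2 * X * chebT (m+1) - chebT m := by
        have := Polynomial.Chebyshev.T_add_two ℝ (m : ℤ)
        simp only [chebT]
        convert this using 3 <;> push_cast <;> ring
      constructor
      · rw [hT]
        refine (natDegree_sub_le _ _).trans (max_le ?_ (h0.1.trans (by omega)))
        calc (2 * X * chebT (m+1)).natDegree ≤ (2 * X : ℝ[X]).natDegree + (chebT (m+1)).natDegree :=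
              natDegree_mul_le
          _ ≤ 1 + (m+1) := by
              gcongr
              · exact (natDegree_mul_le).trans (by simp)
              · exact h1.1
          _ = m + 2 := by omega
      · rw [hT]
        have hc2 : (2 * X * chebT (m+1)) = C 2 * (X * chebT (m+1)) := by
          rw [show (2:ℝ[X]) = C 2 from by norm_cast]; ring
        rw [coeff_sub, hc2, coeff_C_mul, coeff_X_mul,
          coeff_eq_zero_of_natDegree_lt (lt_of_le_of_lt h0.1 (by omega)), h1.2]
        simp
        ring

lemma chebT_leading_ne (kk : ℕ) : (chebT kk).coeff kk ≠ 0 := by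
  rw [(chebT_facts kk).2]; split <;> positivity

lemma exists_rep_aux : ∀ (d : ℕ) (p : Polynomial ℝ), p.natDegree ≤ d →
    ∃ c : ℕ →₀ ℝ, p = toPoly c := by
  intro d
  induction d with
  | zero =>
    intro p hp
    refine ⟨Finsupp.single 0 (p.coeff 0), ?_⟩
    rw [toPoly_single]
    simp [chebT, Polynomial.Chebyshev.T_zero]
    exact (Polynomial.eq_C_of_natDegree_le_zero hp)
  | succ d ihd =>
    intro p hp
    set v : ℝ := p.coeff (d+1) / (chebT (d+1)).coeff (d+1) with hv
    set q : Polynomial ℝ := p - C v * chebT (d+1) with hq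
    have hqd : q.natDegree ≤ d := by
      rw [natDegree_le_iff_coeff_eq_zero]
      intro m hm
      rcases eq_or_lt_of_le (Nat.succ_le_of_lt hm) with h | h
      · rw [hq]
        simp only [coeff_sub, coeff_C_mul, ← h, hv]
        rw [div_mul_cancel₀ _ (chebT_leading_ne (d+1))]
        ring
      · rw [hq]
        simp only [coeff_sub, coeff_C_mul]
        rw [coeff_eq_zero_of_natDegree_lt (lt_of_le_of_lt hp h),
            coeff_eq_zero_of_natDegree_lt (lt_of_le_of_lt (chebT_facts (d+1)).1 h)]
        ring
    obtain ⟨c, hc⟩ := ihd q hqd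
    refine ⟨c + Finsupp.single (d+1) v, ?_⟩
    rw [toPoly_add, toPoly_single, ← hc, hq]
    ring

lemma aeval_toPoly {n : ℕ} (a : Fin n) (g : ℕ →₀ ℝ) :
    Polynomial.aeval (MvPolynomial.X a) (toPoly g)
      = g.sum fun j gj => MvPolynomial.C gj * Polynomial.aeval (MvPolynomial.X a) (chebT j) := by
  unfold toPoly
  rw [map_finsuppSum]
  refine Finsupp.sum_congr fun j hj => ?_
  rw [map_mul, Polynomial.aeval_C, MvPolynomial.algebraMap_eq]

lemma key {n : ℕ} (ε' : ℝ) (hε' : 0 ≤ ε') (k : Fin n → ℕ) (f : Fin n → Polynomial ℝ)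
    (d : Fin n → (ℕ →₀ ℝ)) (hrep : ∀ i, f i - chebT (k i) = toPoly (d i))
    (hw : ∀ i, W (d i) ≤ ε') (s : Finset (Fin n)) :
    ∃ cF cD : (Fin n → ℕ) →₀ ℝ,
      (∏ i ∈ s, Polynomial.aeval (MvPolynomial.X i) (f i)) = toMv cF ∧
      (∏ i ∈ s, Polynomial.aeval (MvPolynomial.X i) (f i))
        - (∏ i ∈ s, Polynomial.aeval (MvPolynomial.X i) (chebT (k i))) = toMv cD ∧
      (∀ β ∈ cF.support, ∀ i, i ∉ s → β i = 0) ∧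
      (∀ β ∈ cD.support, ∀ i, i ∉ s → β i = 0) ∧
      W cF ≤ (1+ε') ^ s.card ∧ W cD ≤ (1+ε') ^ s.card - 1 := by
  classical
  induction s using Finset.induction_on with
  | empty =>
    refine ⟨Finsupp.single (fun _ => 0) 1, 0, ?_, ?_, ?_, ?_, ?_, ?_⟩
    · rw [toMv_single]
      simp [mvChebT, chebT, Polynomial.Chebyshev.T_zero]
    · simp [toMv, Finsupp.sum_zero_index]
    · intro β hβ i _
      have h5 := Finsupp.support_single_subset hβ
      simp only [Finset.mem_singleton] at h5
      rw [h5]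
    · simp
    · rw [W_single]; simp
    · rw [W_zero]; simp
  | @insert a s ha ih =>
    obtain ⟨cF, cD, hF, hD, hsF, hsD, hWF, hWD⟩ := ih
    set ca : ℕ →₀ ℝ := d a + Finsupp.single (k a) 1 with hca
    have hfa : f a = toPoly ca := by
      have h6 : toPoly ca = toPoly (d a) + Polynomial.C 1 * chebT (k a) := by
        rw [hca, toPoly_add, toPoly_single]
      rw [h6, ← hrep a]
      simp
    have hWca : W ca ≤ 1 + ε' := by
      rw [hca]
      refine (W_add_le _ _).trans ?_
      rw [W_single, abs_one]
      linarith [hw a]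
    have hsuppF : ∀ α ∈ cF.support, α a = 0 := fun α hα => hsF α hα a ha
    have hsuppD : ∀ α ∈ cD.support, α a = 0 := fun α hα => hsD α hα a ha
    refine ⟨mulRep a ca cF, mulRep a (d a) cF + mulRep a (Finsupp.single (k a) 1) cD,
      ?_, ?_, ?_, ?_, ?_, ?_⟩
    · rw [Finset.prod_insert ha, toMv_mulRep a ca cF hsuppF, ← hF, ← aeval_toPoly, ← hfa]
    · rw [toMv_add, toMv_mulRep a (d a) cF hsuppF, toMv_mulRep a _ cD hsuppD,
        ← aeval_toPoly, ← aeval_toPoly, ← hrep a, toPoly_single, ← hF, ← hD,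
        Finset.prod_insert ha, Finset.prod_insert ha]
      simp only [map_sub, map_mul, map_one, one_mul]
      ring
    · exact mulRep_support a ca cF hsF
    · intro β hβ i hi
      rcases Finset.mem_union.1 (Finsupp.support_add hβ) with h | h
      · exact mulRep_support a (d a) cF hsF β h i hi
      · exact mulRep_support a _ cD hsD β h i hi
    · rw [Finset.card_insert_of_notMem ha, pow_succ]
      calc W (mulRep a ca cF) ≤ W ca * W cF := W_mulRep_le _ _ _
        _ ≤ (1+ε') * (1+ε')^s.card := mul_le_mul hWca hWF (W_nonneg _) (by positivity)
        _ = (1+ε')^s.card * (1+ε') := mul_comm _ _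
    · rw [Finset.card_insert_of_notMem ha, pow_succ]
      have h1 : W (mulRep a (d a) cF) ≤ ε' * (1+ε')^s.card :=
        (W_mulRep_le _ _ _).trans (mul_le_mul (hw a) hWF (W_nonneg _) hε')
      have h2 : W (mulRep a (Finsupp.single (k a) 1) cD) ≤ (1+ε')^s.card - 1 := by
        refine (W_mulRep_le _ _ _).trans ?_
        rw [W_single, abs_one, one_mul]
        exact hWD
      refine (W_add_le _ _).trans ?_
      nlinarith [pow_nonneg (by linarith : (0:ℝ) ≤ 1+ε') s.card]

lemma extract (p : Polynomial ℝ) (ε δ : ℝ) (hδ : 0 < δ) (h : cheb1Norm p ≤ ε) :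
    ∃ c : ℕ →₀ ℝ, p = toPoly c ∧ W c ≤ ε + δ := by
  have hne : {s : ℝ | ∃ c : ℕ →₀ ℝ, p = c.sum (fun j coef => Polynomial.C coef * chebT j)
      ∧ s = c.sum (fun _ coef => |coef|)}.Nonempty := by
    obtain ⟨c, hc⟩ := exists_rep_aux p.natDegree p le_rfl
    exact ⟨W c, c, hc, rfl⟩
  have h2 : sInf {s : ℝ | ∃ c : ℕ →₀ ℝ, p = c.sum (fun j coef => Polynomial.C coef * chebT j)
      ∧ s = c.sum (fun _ coef => |coef|)} < ε + δ := lt_of_le_of_lt h (by linarith)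
  obtain ⟨sv, ⟨c, hc1, hc2⟩, hlt⟩ := exists_lt_of_csInf_lt hne h2
  refine ⟨c, hc1, ?_⟩
  have h3 : W c = sv := hc2.symm
  linarith

/-- products of univariate approximations of Chebyshev polynomials. -/
theorem mvCheb1Norm_prod_error (n : ℕ) (hn : 1 ≤ n) (ε : ℝ) (hε : 0 < ε)
    (k : Fin n → ℕ) (f : Fin n → Polynomial ℝ)
    (hf : ∀ i, cheb1Norm (f i - chebT (k i)) ≤ ε) :
    mvCheb1Norm ((∏ i, Polynomial.aeval (MvPolynomial.X i) (f i)) - mvChebT n k) ≤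
      ε * ∑ i ∈ Finset.range n, (1 + ε) ^ i ∧
    (ε ≤ 1 / n →
      mvCheb1Norm ((∏ i, Polynomial.aeval (MvPolynomial.X i) (f i)) - mvChebT n k) ≤
        Real.exp 1 * ε * n) := by
  classical
  set P := (∏ i, Polynomial.aeval (MvPolynomial.X i) (f i)) - mvChebT n k with hP
  have hbdd : BddBelow {s : ℝ | ∃ c : (Fin n → ℕ) →₀ ℝ,
      P = c.sum (fun α coef => MvPolynomial.C coef * mvChebT n α) ∧
      s = c.sum (fun _ coef => |coef|)} := by
    refine ⟨0, fun x hx => ?_⟩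
    obtain ⟨c, _, hx2⟩ := hx
    rw [hx2]
    exact W_nonneg c
  have main : ∀ δ : ℝ, 0 < δ → mvCheb1Norm P ≤ (1+(ε+δ))^n - 1 := by
    intro δ hδ
    choose d hd hwd using fun i => extract (f i - chebT (k i)) ε δ hδ (hf i)
    obtain ⟨cF, cD, hF, hD, _, _, _, hWD⟩ := key (ε+δ) (by positivity) k f d hd hwd Finset.univ
    have hle : mvCheb1Norm P ≤ W cD := csInf_le hbdd ⟨cD, hD, rfl⟩
    refine hle.trans (hWD.trans ?_)
    simp [Finset.card_univ]
  have h1 : mvCheb1Norm P ≤ (1+ε)^n - 1 := by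
    have hc : Filter.Tendsto (fun δ : ℝ => (1+(ε+δ))^n - 1) (nhds 0)
        (nhds ((1+(ε+0))^n - 1)) :=
      ((continuous_const.add (continuous_const.add continuous_id)).pow n |>.sub
        continuous_const).tendsto 0
    have ht : Filter.Tendsto (fun δ : ℝ => (1+(ε+δ))^n - 1) (nhdsWithin 0 (Set.Ioi 0))
        (nhds ((1+ε)^n - 1)) := by
      simpa using hc.mono_left nhdsWithin_le_nhds
    refine ge_of_tendsto ht ?_
    filter_upwards [self_mem_nhdsWithin] with δ hδ
    exact main δ hδ
  have hgeom : (1+ε)^n - 1 = ε * ∑ i ∈ Finset.range n, (1+ε)^i := by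
    have hg := geom_sum_mul (1+ε) n
    rw [← hg]; ring
  constructor
  · rw [← hgeom]; exact h1
  · intro hεn
    have hn0 : (0:ℝ) < n := by exact_mod_cast Nat.pos_of_ne_zero (by omega)
    have hterm : ∀ i ∈ Finset.range n, (1+ε)^i ≤ Real.exp 1 := by
      intro i hi
      have h2 : (1+ε) ≤ Real.exp (1/(n:ℝ)) := by
        have := Real.add_one_le_exp (1/(n:ℝ))
        linarith
      calc (1+ε)^i ≤ Real.exp (1/(n:ℝ)) ^ i := pow_le_pow_left₀ (by linarith) h2 i
        _ ≤ Real.exp (1/(n:ℝ)) ^ n :=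
            pow_le_pow_right₀ (Real.one_le_exp (by positivity)) (le_of_lt (Finset.mem_range.1 hi))
        _ = Real.exp ((n:ℝ) * (1/(n:ℝ))) := (Real.exp_nat_mul _ n).symm
        _ = Real.exp 1 := by rw [mul_one_div, div_self (ne_of_gt hn0)]
    have hsum : ∑ i ∈ Finset.range n, (1+ε)^i ≤ (n:ℝ) * Real.exp 1 := by
      calc ∑ i ∈ Finset.range n, (1+ε)^i ≤ ∑ _i ∈ Finset.range n, Real.exp 1 :=
            Finset.sum_le_sum hterm
        _ = (n:ℝ) * Real.exp 1 := by simp [Finset.sum_const, Finset.card_range, nsmul_eq_mul]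
    calc mvCheb1Norm P ≤ ε * ∑ i ∈ Finset.range n, (1+ε)^i := hgeom ▸ h1
      _ ≤ ε * ((n:ℝ) * Real.exp 1) := mul_le_mul_of_nonneg_left hsum (le_of_lt hε)
      _ = Real.exp 1 * ε * n := by ring
end
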